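/- Assume φ ∈ (0,1), ω > 0, μ > 0, b > 0 and r := bφ − μ(1−φ) > 0, and set ρ* := (1 − e^{μ(1−φ)ω − bφω})/(1 − e^{−bφω}). Then 0 < ρ* < 1, and there exists a continuous function v : [0, ω] → ℝ with v(0) = v(ω) = ρ* and v(t) > 0 for all t ∈ [0, ω], such that v has derivative −μ·v(t) at every t ∈ (0, (1−φ)ω) and derivative b·v(t)·(1 − v(t)) at every t ∈ ((1−φ)ω, ω). In other words, ρ* is a positive fixed point of the Poincaré map of the logistic equation with seasonal succession. -/

import Mathlib

set_option maxHeartbeats 1000000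


/-- The value ρ* is a positive fixed point of the Poincaré map of the
logistic equation with seasonal succession: `0 < ρ* < 1` and there is a continuous
function `v` on `[0, ω]` with `v 0 = v ω = ρ*`, positive on `[0, ω]`, solving
`v' = -μ v` on `(0, (1-φ)ω)` and `v' = b v (1 - v)` on `((1-φ)ω, ω)`. -/
theorem stmt_0 (φ ω μ b r ρs : ℝ)
    (hφ0 : 0 < φ) (hφ1 : φ < 1) (hω : 0 < ω) (hμ : 0 < μ) (hb : 0 < b)
    (hr : r = b * φ - μ * (1 - φ)) (hrpos : 0 < r)
    (hρs : ρs = (1 - Real.exp (μ * (1 - φ) * ω - b * φ * ω)) /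
      (1 - Real.exp (-(b * φ * ω)))) :
    0 < ρs ∧ ρs < 1 ∧
      ∃ v : ℝ → ℝ,
        ContinuousOn v (Set.Icc 0 ω) ∧
        v 0 = ρs ∧ v ω = ρs ∧
        (∀ t ∈ Set.Icc (0 : ℝ) ω, 0 < v t) ∧
        (∀ t ∈ Set.Ioo (0 : ℝ) ((1 - φ) * ω), HasDerivAt v (-μ * v t) t) ∧
        (∀ t ∈ Set.Ioo ((1 - φ) * ω) ω, HasDerivAt v (b * v t * (1 - v t)) t) := by
  have hφ' : 0 < 1 - φ := by linarith
  set A := Real.exp (μ * (1 - φ) * ω - b * φ * ω) with hAdef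
  set B := Real.exp (-(b * φ * ω)) with hBdef
  have hμω : 0 < μ * (1 - φ) * ω := by positivity
  have hbω : 0 < b * φ * ω := by positivity
  have hA0 : 0 < A := Real.exp_pos _
  have hB0 : 0 < B := Real.exp_pos _
  have hA1 : A < 1 := by
    apply Real.exp_lt_one_iff.mpr
    nlinarith [mul_pos hrpos hω]
  have hB1 : B < 1 := by
    apply Real.exp_lt_one_iff.mpr; linarith
  have hBA : B < A := by
    apply Real.exp_lt_exp.mpr; linarith
  have hρ0 : 0 < ρs := by
    rw [hρs]; exact div_pos (by linarith) (by linarith)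
  have hρ1 : ρs < 1 := by
    rw [hρs]; rw [div_lt_one (by linarith)]; linarith
  have key : ρs * (1 - B) = 1 - A := by
    rw [hρs]; exact div_mul_cancel₀ _ (by linarith)
  set t0 : ℝ := (1 - φ) * ω with ht0def
  have ht0pos : 0 < t0 := by positivity
  have ht0ω : t0 < ω := by nlinarith
  set l := Real.exp (-(μ * t0)) with hldef
  have hl0 : 0 < l := Real.exp_pos _
  have hl1 : l < 1 := by
    apply Real.exp_lt_one_iff.mpr; nlinarith
  have hρl0 : 0 < ρs * l := by positivity
  have hρl1 : ρs * l < 1 := by nlinarith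
  set C : ℝ := 1 / (ρs * l) - 1 with hCdef
  have hC0 : 0 < C := by
    have h1 : 1 < 1 / (ρs * l) := by
      rw [lt_div_iff₀ hρl0]; linarith
    rw [hCdef]; linarith
  have hBl : B = A * l := by
    rw [hAdef, hBdef, hldef, ← Real.exp_add]
    rw [ht0def]; ring_nf
  have hh : ∀ t : ℝ, 0 < 1 + C * Real.exp (-(b * (t - t0))) := fun t => by
    have := Real.exp_pos (-(b * (t - t0))); nlinarith
  set v : ℝ → ℝ := fun t =>
    if t ≤ t0 then ρs * Real.exp (-(μ * t))
    else (1 + C * Real.exp (-(b * (t - t0))))⁻¹ with hvdef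
  have hρne : ρs ≠ 0 := hρ0.ne'
  have hlne : l ≠ 0 := hl0.ne'
  -- boundary matching
  have hmatch : ∀ x : ℝ, x = t0 →
      ρs * Real.exp (-(μ * x)) = (1 + C * Real.exp (-(b * (x - t0))))⁻¹ := by
    intro x hx
    rw [hx, show t0 - t0 = (0:ℝ) by ring, mul_zero, neg_zero, Real.exp_zero,
      mul_one, hCdef, ← hldef]
    rw [show 1 + (1 / (ρs * l) - 1) = 1 / (ρs * l) by ring, one_div, inv_inv]
  refine ⟨hρ0, hρ1, v, ?_, ?_, ?_, ?_, ?_, ?_⟩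
  · -- continuity
    apply Continuous.continuousOn
    apply Continuous.if_le
    · exact continuous_const.mul
        (Real.continuous_exp.comp ((continuous_const.mul continuous_id).neg))
    · apply Continuous.inv₀
      · exact continuous_const.add (continuous_const.mul
          (Real.continuous_exp.comp
            ((continuous_const.mul (continuous_id.sub continuous_const)).neg)))
      · intro x; exact (hh x).ne'
    · exact continuous_id
    · exact continuous_const
    · intro x hx; exact hmatch x hx
  · -- v 0 = ρs
    show (if (0:ℝ) ≤ t0 then ρs * Real.exp (-(μ * 0))
      else (1 + C * Real.exp (-(b * (0 - t0))))⁻¹) = ρs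
    rw [if_pos ht0pos.le, mul_zero, neg_zero, Real.exp_zero, mul_one]
  · -- v ω = ρs
    show (if ω ≤ t0 then ρs * Real.exp (-(μ * ω))
      else (1 + C * Real.exp (-(b * (ω - t0))))⁻¹) = ρs
    rw [if_neg (not_le.mpr ht0ω)]
    have hexp : Real.exp (-(b * (ω - t0))) = B := by
      rw [hBdef, ht0def]; ring_nf
    rw [hexp]
    have key2 : ρs - ρs * (A * l) = 1 - A := by
      rw [← hBl]; linear_combination key
    have h1 : 1 + C * B = ρs⁻¹ := by
      rw [hCdef, hBl]
      field_simp
      linear_combination key2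
    rw [h1, inv_inv]
  · -- positivity
    intro t _
    show 0 < if t ≤ t0 then ρs * Real.exp (-(μ * t))
      else (1 + C * Real.exp (-(b * (t - t0))))⁻¹
    split_ifs
    · positivity
    · exact inv_pos.mpr (hh t)
  · -- death phase derivative
    intro t ht
    have hlt : t < t0 := ht.2
    have hvt : v t = ρs * Real.exp (-(μ * t)) := if_pos hlt.le
    have h1 : HasDerivAt (fun x : ℝ => -(μ * x)) (-μ) t := by
      have h := ((hasDerivAt_id' t).const_mul μ).neg; rw [mul_one] at h; exact h
    have h2 : HasDerivAt (fun x : ℝ => ρs * Real.exp (-(μ * x)))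
        (ρs * (Real.exp (-(μ * t)) * (-μ))) t := by
      simpa [mul_comm] using (h1.exp).const_mul ρs
    have heq : v =ᶠ[nhds t] (fun x : ℝ => ρs * Real.exp (-(μ * x))) := by
      filter_upwards [Iio_mem_nhds hlt] with x hx
      exact if_pos (le_of_lt hx)
    have h3 := h2.congr_of_eventuallyEq heq
    convert h3 using 1
    · rfl
    · rfl
    rw [hvt]; ring
  · -- growth phase derivative
    intro t ht
    have hlt : t0 < t := ht.1
    have hvt : v t = (1 + C * Real.exp (-(b * (t - t0))))⁻¹ :=
      if_neg (not_le.mpr hlt)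
    have h1 : HasDerivAt (fun x : ℝ => -(b * (x - t0))) (-b) t := by
      have h := (((hasDerivAt_id' t).sub_const t0).const_mul b).neg; rw [mul_one] at h; exact h
    have h2 : HasDerivAt (fun x : ℝ => 1 + C * Real.exp (-(b * (x - t0))))
        (C * (Real.exp (-(b * (t - t0))) * (-b))) t := by
      simpa [mul_comm] using ((h1.exp).const_mul C).const_add 1
    have h3 : HasDerivAt (fun x : ℝ => (1 + C * Real.exp (-(b * (x - t0))))⁻¹)
        (-(C * (Real.exp (-(b * (t - t0))) * (-b))) /
          (1 + C * Real.exp (-(b * (t - t0))))^2) t := h2.inv (hh t).ne'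
    have heq : v =ᶠ[nhds t]
        (fun x : ℝ => (1 + C * Real.exp (-(b * (x - t0))))⁻¹) := by
      filter_upwards [Ioi_mem_nhds hlt] with x hx
      exact if_neg (not_le.mpr hx)
    have h4 := h3.congr_of_eventuallyEq heq
    convert h4 using 1
    · rfl
    · rfl
    rw [hvt]
    set E := Real.exp (-(b * (t - t0))) with hE
    have hD : (1 + C * E) ≠ 0 := (hh t).ne'
    have h5 : ∀ D : ℝ, D ≠ 0 → b * D⁻¹ * (1 - D⁻¹) = b * (D - 1) / D ^ 2 := by
      intro D hDne
      have hstep : (1 : ℝ) - D⁻¹ = (D - 1) / D := by field_simp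
      rw [hstep]; ring
    rw [show -(C * (E * (-b))) / (1 + C * E) ^ 2
        = b * ((1 + C * E) - 1) / (1 + C * E) ^ 2 by ring]
    exact h5 _ hD
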